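/- There do not exist a point x_0 ∈ E and a sequence (a_n)_{n≥1} of pairwise distinct points of E such that a_n → x_0 and |a_{n+1} − x_0| / |a_n − x_0| → 1 as n → ∞. -/

import Mathlib

open Filter Set Metric Pointwise Topology

/-- No slowly decreasing sequences near any point of `E`: there do not
exist `x₀ ∈ E` and a sequence of pairwise distinct points of `E` converging to `x₀`
whose successive distances to `x₀` have ratio tending to `1`. -/
theorem falconer_no_slow_sequences
    (M : ℕ → ℕ) (hMpos : ∀ i, 0 < M i) (hMmono : Monotone M)
    (hMtop : Tendsto M atTop atTop)
    (q : ℕ → ℕ) (hq0 : q 0 = 2) (hqrec : ∀ i, q (i + 1) = q i ^ M i)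
    (φ : ℝ → ℝ) (hφpos : ∀ t : ℝ, 2 ≤ t → 0 < φ t)
    (hφmono : MonotoneOn φ (Set.Ici (2 : ℝ)))
    (hφtop : Tendsto φ atTop atTop)
    (G : ℕ → Set ℝ)
    (hG : ∀ i, G i = {x : ℝ | ∃ k : ℤ, 0 ≤ k ∧ k ≤ (q i : ℤ) ∧ x = (k : ℝ) / (q i : ℝ)})
    (r : ℕ → ℝ) (hr : ∀ i, r i = (q i : ℝ) ^ (-φ ((q i : ℕ) : ℝ)))
    (Ei : ℕ → Set ℝ)
    (hEi : ∀ i, Ei i = {x ∈ Set.Icc (0 : ℝ) 1 | Metric.infDist x (G i) ≤ r i})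
    (E : Set ℝ) (hE : E = ⋂ i, Ei i) :
    ¬ ∃ (x₀ : ℝ) (a : ℕ → ℝ), x₀ ∈ E ∧ (∀ n, a n ∈ E) ∧ Function.Injective a ∧
      Tendsto a atTop (nhds x₀) ∧
      Tendsto (fun n => |a (n + 1) - x₀| / |a n - x₀|) atTop (nhds 1) := by
  classical
  rintro ⟨x₀, a, hx₀, ha, hinj, hconv, hratio⟩
  -- basic facts about q
  have hq2 : ∀ i, 2 ≤ q i := by
    intro i
    induction i with
    | zero => simp [hq0]
    | succ n ih =>
      rw [hqrec]
      exact le_trans ih (Nat.le_self_pow (hMpos n).ne' _)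
  have hqbig : ∀ C : ℝ, ∃ i, C ≤ (q i : ℝ) := by
    intro C
    obtain ⟨n, hn⟩ := exists_nat_ge C
    obtain ⟨i0, hi0⟩ := (hMtop.eventually_ge_atTop n).exists
    refine ⟨i0 + 1, hn.trans ?_⟩
    have h1 : n ≤ 2 ^ n := Nat.le_of_lt (Nat.lt_two_pow_self (n := n))
    have h2 : (2:ℕ) ^ n ≤ 2 ^ M i0 := Nat.pow_le_pow_right (by norm_num) hi0
    have h3 : (2:ℕ) ^ M i0 ≤ q i0 ^ M i0 := Nat.pow_le_pow_left (hq2 i0) _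
    have : n ≤ q (i0 + 1) := by rw [hqrec]; omega
    exact_mod_cast this
  -- the grid sets are finite and nonempty
  have hGfin : ∀ i, (G i).Finite := by
    intro i
    have hsub : G i ⊆ (fun k : ℤ => (k : ℝ) / (q i : ℝ)) '' (Set.Icc (0:ℤ) (q i : ℤ)) := by
      rw [hG]
      rintro x ⟨k, hk0, hk1, rfl⟩
      exact ⟨k, ⟨hk0, hk1⟩, rfl⟩
    exact ((Set.finite_Icc _ _).image _).subset hsub
  have hGne : ∀ i, (G i).Nonempty := by
    intro i
    rw [hG]
    exact ⟨0, 0, le_refl _, Int.natCast_nonneg _, by simp⟩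
  -- witness extraction
  have hwit : ∀ i x, Metric.infDist x (G i) ≤ r i →
      ∃ k : ℤ, |x - (k : ℝ) / (q i : ℝ)| ≤ r i := by
    intro i x hx
    obtain ⟨g, hg, hgd⟩ := (hGfin i).isCompact.exists_infDist_eq_dist (hGne i) x
    rw [hG] at hg
    obtain ⟨k, _, _, rfl⟩ := hg
    refine ⟨k, ?_⟩
    rw [← Real.dist_eq, ← hgd]
    exact hx
  have hQpos : ∀ i, (0:ℝ) < (q i : ℝ) := by
    intro i
    have := hq2 i
    positivity
  -- dichotomy: distances between points of Ei i
  have hdich : ∀ i x y, x ∈ Ei i → y ∈ Ei i →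
      |x - y| ≤ 2 * r i ∨ 1 / (q i : ℝ) - 2 * r i ≤ |x - y| := by
    intro i x y hx hy
    rw [hEi] at hx hy
    obtain ⟨kx, hkx⟩ := hwit i x hx.2
    obtain ⟨ky, hky⟩ := hwit i y hy.2
    have hQ := hQpos i
    by_cases hk : kx = ky
    · left
      subst hk
      have hxy : x - y = (x - (kx:ℝ)/(q i:ℝ)) - (y - (kx:ℝ)/(q i:ℝ)) := by ring
      rw [hxy]
      calc |(x - (kx:ℝ)/(q i:ℝ)) - (y - (kx:ℝ)/(q i:ℝ))|
          ≤ |x - (kx:ℝ)/(q i:ℝ)| + |y - (kx:ℝ)/(q i:ℝ)| := abs_sub _ _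
        _ ≤ 2 * r i := by linarith
    · right
      have h1 : (1:ℝ) / (q i : ℝ) ≤ |(kx:ℝ)/(q i:ℝ) - (ky:ℝ)/(q i:ℝ)| := by
        have hk1 : (1:ℝ) ≤ |(kx:ℝ) - (ky:ℝ)| := by
          have : (1:ℤ) ≤ |kx - ky| := Int.one_le_abs (sub_ne_zero.mpr hk)
          calc (1:ℝ) = ((1:ℤ):ℝ) := by norm_num
            _ ≤ ((|kx - ky| : ℤ) : ℝ) := by exact_mod_cast this
            _ = |(kx:ℝ) - (ky:ℝ)| := by push_cast [abs_sub_comm]; rw [abs_sub_comm]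
        rw [div_sub_div_same, abs_div, abs_of_pos hQ]
        gcongr
      have h2 : |(kx:ℝ)/(q i:ℝ) - (ky:ℝ)/(q i:ℝ)|
          ≤ |x - (kx:ℝ)/(q i:ℝ)| + |x - y| + |y - (ky:ℝ)/(q i:ℝ)| := by
        have he : (kx:ℝ)/(q i:ℝ) - (ky:ℝ)/(q i:ℝ)
            = -(x - (kx:ℝ)/(q i:ℝ)) + (x - y) + (y - (ky:ℝ)/(q i:ℝ)) := by ring
        rw [he]
        calc |-(x - (kx:ℝ)/(q i:ℝ)) + (x - y) + (y - (ky:ℝ)/(q i:ℝ))|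
            ≤ |-(x - (kx:ℝ)/(q i:ℝ)) + (x - y)| + |y - (ky:ℝ)/(q i:ℝ)| := abs_add_le _ _
          _ ≤ |-(x - (kx:ℝ)/(q i:ℝ))| + |x - y| + |y - (ky:ℝ)/(q i:ℝ)| := by
              have := abs_add_le (-(x - (kx:ℝ)/(q i:ℝ))) (x - y)
              linarith
          _ = |x - (kx:ℝ)/(q i:ℝ)| + |x - y| + |y - (ky:ℝ)/(q i:ℝ)| := by rw [abs_neg]
      linarith
  -- distances to x₀ tend to 0
  have hd0 : Tendsto (fun n => |a n - x₀|) atTop (𝓝 0) := by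
    have h1 : Tendsto (fun n => a n - x₀) atTop (𝓝 (x₀ - x₀)) :=
      hconv.sub tendsto_const_nhds
    rw [sub_self] at h1
    have := h1.abs
    simpa using this
  -- the ratio is eventually > 1/2
  have hev : ∀ᶠ n in atTop, 1/2 < |a (n + 1) - x₀| / |a n - x₀| :=
    hratio.eventually (eventually_gt_nhds (by norm_num))
  obtain ⟨N, hN⟩ := eventually_atTop.mp hev
  have hdpos : ∀ n, N ≤ n → 0 < |a n - x₀| := by
    intro n hn
    rcases (abs_nonneg (a n - x₀)).lt_or_eq with h | h
    · exact h
    · exfalso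
      have h2 := hN n hn
      rw [← h, div_zero] at h2
      norm_num at h2
  have hdN : 0 < |a N - x₀| := hdpos N le_rfl
  -- choose a threshold for φ
  obtain ⟨T, hT⟩ := eventually_atTop.mp (hφtop.eventually_ge_atTop 2)
  -- choose a scale i
  obtain ⟨i, hi⟩ := hqbig (max (max T 8) (2 / |a N - x₀| + 1))
  have hQT : T ≤ (q i : ℝ) := le_trans (le_max_left _ _) (le_trans (le_max_left _ _) hi)
  have hQ8 : (8:ℝ) ≤ (q i : ℝ) := le_trans (le_max_right _ _) (le_trans (le_max_left _ _) hi)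
  have hQd : 2 / |a N - x₀| + 1 ≤ (q i : ℝ) := le_trans (le_max_right _ _) hi
  have hQ := hQpos i
  have hφ2 : 2 ≤ φ ((q i : ℕ) : ℝ) := hT _ hQT
  have hri : r i ≤ (q i : ℝ) ^ (-(2:ℝ)) := by
    rw [hr]
    exact Real.rpow_le_rpow_of_exponent_le (by linarith) (by linarith)
  have hrpow : (q i : ℝ) ^ (-(2:ℝ)) = 1 / (q i : ℝ) ^ 2 := by
    rw [Real.rpow_neg hQ.le, one_div]
    congr 1
    rw [show ((2:ℝ)) = ((2:ℕ):ℝ) by norm_num, Real.rpow_natCast]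
  rw [hrpow] at hri
  have hrnn : 0 ≤ r i := by rw [hr]; positivity
  -- r i ≤ (1/8) / q i
  have hri8 : r i ≤ (1/8) / (q i : ℝ) := by
    rw [le_div_iff₀ hQ]
    calc r i * (q i : ℝ) ≤ (1 / (q i : ℝ)^2) * (q i : ℝ) := by
          apply mul_le_mul_of_nonneg_right hri hQ.le
      _ = 1 / (q i : ℝ) := by field_simp
      _ ≤ 1/8 := by
          rw [div_le_div_iff₀ hQ (by norm_num)]
          linarith
  have hv : 0 < 1 / (q i : ℝ) := by positivity
  have hri' : 2 * r i ≤ (1/4) * (1 / (q i : ℝ)) := by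
    have : (1/8) / (q i : ℝ) = (1/8) * (1 / (q i : ℝ)) := by ring
    rw [this] at hri8
    linarith
  -- 2 r i < |a N - x₀|
  have hbdN : 2 * r i < |a N - x₀| := by
    have h1 : 2 / |a N - x₀| < (q i : ℝ) := by linarith
    have h2 : 2 / (q i : ℝ) < |a N - x₀| := by
      rw [div_lt_iff₀ hQ]
      rw [div_lt_iff₀ hdN] at h1
      linarith [mul_comm (q i : ℝ) |a N - x₀|]
    have h3 : (1/4) * (1 / (q i : ℝ)) < 2 / (q i : ℝ) := by
      rw [mul_one_div, div_lt_div_iff₀ hQ hQ]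
      nlinarith
    linarith
  -- membership in Ei i
  rw [hE] at hx₀
  have hmemE : ∀ n, a n ∈ Ei i := fun n => by
    have := ha n; rw [hE] at this; exact Set.mem_iInter.mp this i
  have hx₀i : x₀ ∈ Ei i := Set.mem_iInter.mp hx₀ i
  -- dichotomy for each distance
  have hdi : ∀ n, |a n - x₀| ≤ 2 * r i ∨ 1 / (q i : ℝ) - 2 * r i ≤ |a n - x₀| :=
    fun n => hdich i (a n) x₀ (hmemE n) hx₀i
  -- eventually distances are below the gap, hence ≤ 2 r i
  have hgap : 0 < 1 / (q i : ℝ) - 2 * r i := by linarith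
  have hex : ∃ n : ℕ, |a (N + n) - x₀| ≤ 2 * r i := by
    have hev2 : ∀ᶠ n in atTop, |a n - x₀| < 1 / (q i : ℝ) - 2 * r i :=
      hd0.eventually (eventually_lt_nhds hgap)
    obtain ⟨n0, hn0, hn0'⟩ := ((eventually_ge_atTop N).and hev2).exists
    refine ⟨n0 - N, ?_⟩
    rw [Nat.add_sub_cancel' hn0]
    rcases hdi n0 with h | h
    · exact h
    · linarith
  set m := Nat.find hex with hmdef
  have hm : |a (N + m) - x₀| ≤ 2 * r i := Nat.find_spec hex
  have hm0 : m ≠ 0 := by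
    intro h
    rw [h, Nat.add_zero] at hm
    linarith
  have hk : ¬ |a (N + (m - 1)) - x₀| ≤ 2 * r i := Nat.find_min hex (by omega)
  have hlow : 1 / (q i : ℝ) - 2 * r i ≤ |a (N + (m - 1)) - x₀| := by
    rcases hdi (N + (m - 1)) with h | h
    · exact absurd h hk
    · exact h
  -- contradiction with the ratio bound
  have hrat := hN (N + (m - 1)) (Nat.le_add_right _ _)
  have hdpos' := hdpos (N + (m - 1)) (Nat.le_add_right _ _)
  rw [lt_div_iff₀ hdpos'] at hrat
  have hidx : N + (m - 1) + 1 = N + m := by omega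
  rw [hidx] at hrat
  -- hrat : 1/2 * |a (N + (m-1)) - x₀| < |a (N + m) - x₀|
  have h1 : 1 / (q i : ℝ) - 2 * r i ≥ (3/4) * (1 / (q i : ℝ)) := by linarith
  nlinarith [hv]
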